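/- Let s < 0 and define g_k and R_{k,t} as follows: g_k(η) := 2^{−sk/2}( χ_{[k+1/8, k+1/4]}(η) + χ_{[−2k+1/4, −2k+1/2]}(η) ), and R_{k,t}(ξ) := χ_{[1/2,1]}(ξ) · | ∬_{ℝ²} (e^{2it(ξ−ξ₁)(ξ−ξ₂)} − 1)/(2(ξ−ξ₁)(ξ−ξ₂)) · g_k(ξ₁) g_k(ξ₂) g_k(ξ−ξ₁−ξ₂) dξ₁ dξ₂ |. Then for any s′, σ′ ∈ ℝ there exist κ ∈ (0,1) and k₀ such that for all integers k ≥ k₀, with t = κ/k², one has ( ∫_ℝ ⟨ξ⟩^{2σ′} 2^{2s′|ξ|} R_{k,t}(ξ)² dξ )^{1/2} ≥ 2^{−sk/2}. -/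

import Mathlib

open MeasureTheory Real

set_option maxHeartbeats 1000000

/-- `g_k(η) = 2^{−sk/2}(χ_{[k+1/8, k+1/4]}(η) + χ_{[−2k+1/4, −2k+1/2]}(η))`. -/
noncomputable def gfun (s : ℝ) (k : ℕ) (η : ℝ) : ℝ :=
  (2 : ℝ) ^ (-s * (k : ℝ) / 2) *
    (Set.indicator (Set.Icc ((k : ℝ) + 1 / 8) ((k : ℝ) + 1 / 4)) (fun _ => (1 : ℝ)) η
      + Set.indicator (Set.Icc (-2 * (k : ℝ) + 1 / 4) (-2 * (k : ℝ) + 1 / 2)) (fun _ => (1 : ℝ)) η)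

/-- `R_{k,t}(ξ) = χ_{[1/2,1]}(ξ) · |∬ (e^{2it(ξ−ξ₁)(ξ−ξ₂)} − 1)/(2(ξ−ξ₁)(ξ−ξ₂))
  g_k(ξ₁) g_k(ξ₂) g_k(ξ−ξ₁−ξ₂) dξ₁ dξ₂|`. -/
noncomputable def Rfun (s : ℝ) (k : ℕ) (t ξ : ℝ) : ℝ :=
  Set.indicator (Set.Icc (1 / 2 : ℝ) 1) (fun _ => (1 : ℝ)) ξ *
    ‖∫ p : ℝ × ℝ,
      (Complex.exp (2 * Complex.I * (t : ℂ) * ((ξ - p.1 : ℝ) : ℂ) * ((ξ - p.2 : ℝ) : ℂ)) - 1)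
          / (2 * ((ξ - p.1 : ℝ) : ℂ) * ((ξ - p.2 : ℝ) : ℂ))
        * ((gfun s k p.1 : ℝ) : ℂ) * ((gfun s k p.2 : ℝ) : ℂ)
        * ((gfun s k (ξ - p.1 - p.2) : ℝ) : ℂ)‖


lemma norm_exp_I_sub_one_le (α : ℝ) : ‖Complex.exp ((α : ℂ) * Complex.I) - 1‖ ≤ |α| := by
  have hre : (Complex.exp ((α : ℂ) * Complex.I) - 1).re = Real.cos α - 1 := by
    simp [Complex.exp_ofReal_mul_I_re]
  have him : (Complex.exp ((α : ℂ) * Complex.I) - 1).im = Real.sin α := by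
    simp [Complex.exp_ofReal_mul_I_im]
  have h1 : ‖Complex.exp ((α : ℂ) * Complex.I) - 1‖ ^ 2 = (Real.cos α - 1) ^ 2 + Real.sin α ^ 2 := by
    rw [Complex.sq_norm, Complex.normSq_apply, hre, him]
    ring
  have h2 : (Real.cos α - 1) ^ 2 + Real.sin α ^ 2 ≤ α ^ 2 := by
    nlinarith [Real.sin_sq_add_cos_sq α, Real.one_sub_sq_div_two_le_cos (x := α)]
  calc ‖Complex.exp ((α : ℂ) * Complex.I) - 1‖
      = √(‖Complex.exp ((α : ℂ) * Complex.I) - 1‖ ^ 2) := (Real.sqrt_sq (norm_nonneg _)).symm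
    _ ≤ √(α ^ 2) := Real.sqrt_le_sqrt (by nlinarith)
    _ = |α| := Real.sqrt_sq_eq_abs α

lemma mult_eq (t a b : ℝ) :
    (Complex.exp (2 * Complex.I * (t : ℂ) * (a : ℂ) * (b : ℂ)) - 1) / (2 * (a : ℂ) * (b : ℂ))
      = (Complex.exp (((2 * t * a * b : ℝ) : ℂ) * Complex.I) - 1) / (((2 * a * b : ℝ) : ℂ)) := by
  have h1 : (2 * Complex.I * (t : ℂ) * (a : ℂ) * (b : ℂ)) = ((2 * t * a * b : ℝ) : ℂ) * Complex.I := by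
    push_cast; ring
  have h2 : (2 * (a : ℂ) * (b : ℂ)) = ((2 * a * b : ℝ) : ℂ) := by push_cast; ring
  rw [h1, h2]

lemma mult_im (t a b : ℝ) :
    ((Complex.exp (2 * Complex.I * (t : ℂ) * (a : ℂ) * (b : ℂ)) - 1)
      / (2 * (a : ℂ) * (b : ℂ))).im = Real.sin (2 * t * a * b) / (2 * a * b) := by
  rw [mult_eq, Complex.div_ofReal_im]
  congr 1
  rw [Complex.sub_im, Complex.exp_ofReal_mul_I_im, Complex.one_im, sub_zero]

lemma mult_norm_le (t a b : ℝ) (ht : 0 ≤ t) :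
    ‖(Complex.exp (2 * Complex.I * (t : ℂ) * (a : ℂ) * (b : ℂ)) - 1)
      / (2 * (a : ℂ) * (b : ℂ))‖ ≤ t := by
  rw [mult_eq, norm_div]
  rcases eq_or_ne (2 * a * b) 0 with h | h
  · simp [h, ht]
  · have hpos : 0 < ‖((2 * a * b : ℝ) : ℂ)‖ := by
      rw [Complex.norm_real, Real.norm_eq_abs]; exact abs_pos.2 h
    rw [div_le_iff₀ hpos]
    calc ‖Complex.exp (((2 * t * a * b : ℝ) : ℂ) * Complex.I) - 1‖ ≤ |2 * t * a * b| :=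
          norm_exp_I_sub_one_le _
      _ = t * ‖((2 * a * b : ℝ) : ℂ)‖ := by
          rw [show (2 * t * a * b) = t * (2 * a * b) by ring, abs_mul, abs_of_nonneg ht,
            Complex.norm_real, Real.norm_eq_abs]

section gprops

variable (s : ℝ) (k : ℕ)

lemma ind_nonneg (A : Set ℝ) (x : ℝ) : 0 ≤ Set.indicator A (fun _ => (1 : ℝ)) x :=
  Set.indicator_nonneg (fun _ _ => zero_le_one) x

lemma ind_le_one (A : Set ℝ) (x : ℝ) : Set.indicator A (fun _ => (1 : ℝ)) x ≤ 1 := by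
  classical
  rw [Set.indicator_apply]; split <;> norm_num

lemma g_nonneg (x : ℝ) : 0 ≤ gfun s k x := by
  have := ind_nonneg (Set.Icc ((k : ℝ) + 1 / 8) ((k : ℝ) + 1 / 4)) x
  have := ind_nonneg (Set.Icc (-2 * (k : ℝ) + 1 / 4) (-2 * (k : ℝ) + 1 / 2)) x
  have := Real.rpow_pos_of_pos (by norm_num : (0:ℝ) < 2) (-s * (k : ℝ) / 2)
  unfold gfun; nlinarith

lemma g_measurable : Measurable (gfun s k) := by
  unfold gfun
  exact measurable_const.mul
    ((measurable_const.indicator measurableSet_Icc).add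
      (measurable_const.indicator measurableSet_Icc))

lemma g_le_const (x : ℝ) : gfun s k x ≤ (2 : ℝ) ^ (-s * (k : ℝ) / 2) * 2 := by
  have h1 := ind_le_one (Set.Icc ((k : ℝ) + 1 / 8) ((k : ℝ) + 1 / 4)) x
  have h2 := ind_le_one (Set.Icc (-2 * (k : ℝ) + 1 / 4) (-2 * (k : ℝ) + 1 / 2)) x
  have h3 := Real.rpow_pos_of_pos (by norm_num : (0:ℝ) < 2) (-s * (k : ℝ) / 2)
  unfold gfun; nlinarith

lemma g_le_ind (x : ℝ) :
    gfun s k x ≤ (2 : ℝ) ^ (-s * (k : ℝ) / 2) * 2 *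
      Set.indicator (Set.Icc ((k : ℝ) + 1 / 8) ((k : ℝ) + 1 / 4) ∪
        Set.Icc (-2 * (k : ℝ) + 1 / 4) (-2 * (k : ℝ) + 1 / 2)) (fun _ => (1 : ℝ)) x := by
  by_cases h : x ∈ Set.Icc ((k : ℝ) + 1 / 8) ((k : ℝ) + 1 / 4) ∪
      Set.Icc (-2 * (k : ℝ) + 1 / 4) (-2 * (k : ℝ) + 1 / 2)
  · rw [Set.indicator_of_mem h, mul_one]; exact g_le_const s k x
  · rw [Set.indicator_of_notMem h, mul_zero]
    rw [Set.mem_union] at h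
    push_neg at h
    unfold gfun
    rw [Set.indicator_of_notMem h.1, Set.indicator_of_notMem h.2]
    simp

lemma g_ge_one (x : ℝ) (h : x ∈ Set.Icc ((k : ℝ) + 1 / 8) ((k : ℝ) + 1 / 4)) :
    (2 : ℝ) ^ (-s * (k : ℝ) / 2) ≤ gfun s k x := by
  have h2 := ind_nonneg (Set.Icc (-2 * (k : ℝ) + 1 / 4) (-2 * (k : ℝ) + 1 / 2)) x
  have h3 := Real.rpow_pos_of_pos (by norm_num : (0:ℝ) < 2) (-s * (k : ℝ) / 2)
  unfold gfun
  rw [Set.indicator_of_mem h]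
  nlinarith

lemma g_ge_two (x : ℝ) (h : x ∈ Set.Icc (-2 * (k : ℝ) + 1 / 4) (-2 * (k : ℝ) + 1 / 2)) :
    (2 : ℝ) ^ (-s * (k : ℝ) / 2) ≤ gfun s k x := by
  have h2 := ind_nonneg (Set.Icc ((k : ℝ) + 1 / 8) ((k : ℝ) + 1 / 4)) x
  have h3 := Real.rpow_pos_of_pos (by norm_num : (0:ℝ) < 2) (-s * (k : ℝ) / 2)
  unfold gfun
  rw [Set.indicator_of_mem h]
  nlinarith

lemma g_support (x : ℝ) (h : gfun s k x ≠ 0) : |x| ≤ 2 * (k : ℝ) + 1 := by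
  have hk : (0:ℝ) ≤ (k : ℝ) := Nat.cast_nonneg k
  by_cases h1 : x ∈ Set.Icc ((k : ℝ) + 1 / 8) ((k : ℝ) + 1 / 4)
  · rw [Set.mem_Icc] at h1; rw [abs_le]; constructor <;> nlinarith
  by_cases h2 : x ∈ Set.Icc (-2 * (k : ℝ) + 1 / 4) (-2 * (k : ℝ) + 1 / 2)
  · rw [Set.mem_Icc] at h2; rw [abs_le]; constructor <;> nlinarith
  exfalso; apply h
  unfold gfun
  rw [Set.indicator_of_notMem h1, Set.indicator_of_notMem h2]
  simp

end gprops

lemma im_mul_ofReal3 (z : ℂ) (r₁ r₂ r₃ : ℝ) :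
    (z * (r₁ : ℂ) * (r₂ : ℂ) * (r₃ : ℂ)).im = z.im * (r₁ * r₂ * r₃) := by
  simp [Complex.mul_im, Complex.ofReal_re, Complex.ofReal_im]
  ring

lemma Fmeas (s t ξ : ℝ) (k : ℕ) :
    Measurable (fun p : ℝ × ℝ =>
      (Complex.exp (2 * Complex.I * (t : ℂ) * ((ξ - p.1 : ℝ) : ℂ) * ((ξ - p.2 : ℝ) : ℂ)) - 1)
          / (2 * ((ξ - p.1 : ℝ) : ℂ) * ((ξ - p.2 : ℝ) : ℂ))
        * ((gfun s k p.1 : ℝ) : ℂ) * ((gfun s k p.2 : ℝ) : ℂ)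
        * ((gfun s k (ξ - p.1 - p.2) : ℝ) : ℂ)) := by
  have h1 : Measurable (fun p : ℝ × ℝ => (( ξ - p.1 : ℝ) : ℂ)) :=
    Complex.measurable_ofReal.comp (measurable_const.sub measurable_fst)
  have h2 : Measurable (fun p : ℝ × ℝ => (( ξ - p.2 : ℝ) : ℂ)) :=
    Complex.measurable_ofReal.comp (measurable_const.sub measurable_snd)
  have hnum : Measurable (fun p : ℝ × ℝ =>
      Complex.exp (2 * Complex.I * (t : ℂ) * ((ξ - p.1 : ℝ) : ℂ) * ((ξ - p.2 : ℝ) : ℂ)) - 1) :=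
    (Complex.measurable_exp.comp (((measurable_const.mul h1).mul h2))).sub measurable_const
  have hden : Measurable (fun p : ℝ × ℝ => 2 * ((ξ - p.1 : ℝ) : ℂ) * ((ξ - p.2 : ℝ) : ℂ)) :=
    (measurable_const.mul h1).mul h2
  have hg1 : Measurable (fun p : ℝ × ℝ => ((gfun s k p.1 : ℝ) : ℂ)) :=
    Complex.measurable_ofReal.comp ((g_measurable s k).comp measurable_fst)
  have hg2 : Measurable (fun p : ℝ × ℝ => ((gfun s k p.2 : ℝ) : ℂ)) :=
    Complex.measurable_ofReal.comp ((g_measurable s k).comp measurable_snd)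
  have hg3 : Measurable (fun p : ℝ × ℝ => ((gfun s k (ξ - p.1 - p.2) : ℝ) : ℂ)) :=
    Complex.measurable_ofReal.comp ((g_measurable s k).comp
      ((measurable_const.sub measurable_fst).sub measurable_snd))
  exact (((hnum.div hden).mul hg1).mul hg2).mul hg3

lemma key (s : ℝ) (k : ℕ) (hk : 2 ≤ k) (ξ : ℝ)
    (hξ : ξ ∈ Set.Icc (23 / 32 : ℝ) (25 / 32)) :
    1 / 12 / (k : ℝ) ^ 2 / 2 * ((2 : ℝ) ^ (-s * (k : ℝ) / 2)) ^ 3 / 1024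
      ≤ Rfun s k (1 / 12 / (k : ℝ) ^ 2) ξ := by
  have hk2 : (2 : ℝ) ≤ (k : ℝ) := by exact_mod_cast hk
  have hkpos : (0 : ℝ) < (k : ℝ) := by linarith
  obtain ⟨hξ1, hξ2⟩ := hξ
  set t : ℝ := 1 / 12 / (k : ℝ) ^ 2 with ht_def
  have htpos : 0 < t := by positivity
  have htk : t * (k : ℝ) ^ 2 = 1 / 12 := by rw [ht_def]; field_simp
  set c : ℝ := (2 : ℝ) ^ (-s * (k : ℝ) / 2) with hc_def
  have hcpos : 0 < c := Real.rpow_pos_of_pos (by norm_num) _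
  set F : ℝ × ℝ → ℂ := fun p =>
    (Complex.exp (2 * Complex.I * (t : ℂ) * ((ξ - p.1 : ℝ) : ℂ) * ((ξ - p.2 : ℝ) : ℂ)) - 1)
        / (2 * ((ξ - p.1 : ℝ) : ℂ) * ((ξ - p.2 : ℝ) : ℂ))
      * ((gfun s k p.1 : ℝ) : ℂ) * ((gfun s k p.2 : ℝ) : ℂ)
      * ((gfun s k (ξ - p.1 - p.2) : ℝ) : ℂ) with hF_def
  have hFmeas : Measurable F := Fmeas s t ξ k
  -- the upper dominating function
  set U : Set ℝ := Set.Icc ((k : ℝ) + 1 / 8) ((k : ℝ) + 1 / 4) ∪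
      Set.Icc (-2 * (k : ℝ) + 1 / 4) (-2 * (k : ℝ) + 1 / 2) with hU_def
  have hUmeas : MeasurableSet U := measurableSet_Icc.union measurableSet_Icc
  have hUvol : volume U < ⊤ :=
    lt_of_le_of_lt (measure_union_le _ _)
      (ENNReal.add_lt_top.2 ⟨measure_Icc_lt_top, measure_Icc_lt_top⟩)
  have hind_int : Integrable (fun x : ℝ => Set.indicator U (fun _ => (1 : ℝ)) x) :=
    (integrable_indicator_iff hUmeas).2 (integrableOn_const hUvol.ne)
  have hbound : ∀ p : ℝ × ℝ, ‖F p‖ ≤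
      (t * (c * 2) ^ 3 * Set.indicator U (fun _ => (1 : ℝ)) p.1) *
        Set.indicator U (fun _ => (1 : ℝ)) p.2 := by
    intro p
    have e1 : ‖F p‖ = ‖(Complex.exp (2 * Complex.I * (t : ℂ) * ((ξ - p.1 : ℝ) : ℂ) *
          ((ξ - p.2 : ℝ) : ℂ)) - 1) / (2 * ((ξ - p.1 : ℝ) : ℂ) * ((ξ - p.2 : ℝ) : ℂ))‖
        * gfun s k p.1 * gfun s k p.2 * gfun s k (ξ - p.1 - p.2) := by
      rw [hF_def]
      simp only [norm_mul, Complex.norm_real, Real.norm_eq_abs]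
      rw [abs_of_nonneg (g_nonneg s k p.1), abs_of_nonneg (g_nonneg s k p.2),
        abs_of_nonneg (g_nonneg s k (ξ - p.1 - p.2))]
    rw [e1]
    have hm := mult_norm_le t (ξ - p.1) (ξ - p.2) htpos.le
    have hg1 := g_le_ind s k p.1
    have hg2 := g_le_ind s k p.2
    have hg3 := g_le_const s k (ξ - p.1 - p.2)
    have hi1 := ind_nonneg U p.1
    have hi2 := ind_nonneg U p.2
    have n1 := g_nonneg s k p.1
    have n2 := g_nonneg s k p.2
    have n3 := g_nonneg s k (ξ - p.1 - p.2)
    have nn := norm_nonneg ((Complex.exp (2 * Complex.I * (t : ℂ) * ((ξ - p.1 : ℝ) : ℂ) *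
          ((ξ - p.2 : ℝ) : ℂ)) - 1) / (2 * ((ξ - p.1 : ℝ) : ℂ) * ((ξ - p.2 : ℝ) : ℂ)))
    rw [← hU_def] at hg1 hg2
    rw [← hc_def] at hg1 hg2 hg3
    have step : ‖(Complex.exp (2 * Complex.I * (t : ℂ) * ((ξ - p.1 : ℝ) : ℂ) *
          ((ξ - p.2 : ℝ) : ℂ)) - 1) / (2 * ((ξ - p.1 : ℝ) : ℂ) * ((ξ - p.2 : ℝ) : ℂ))‖
        * gfun s k p.1 * gfun s k p.2 * gfun s k (ξ - p.1 - p.2) ≤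
        ((t * (c * 2 * Set.indicator U (fun _ => (1 : ℝ)) p.1)) *
          (c * 2 * Set.indicator U (fun _ => (1 : ℝ)) p.2)) * (c * 2) := by
      have c2 : (0:ℝ) ≤ c * 2 := by positivity
      have h_tc1 : 0 ≤ t * (c * 2 * Set.indicator U (fun _ => (1 : ℝ)) p.1) :=
        mul_nonneg htpos.le (mul_nonneg c2 hi1)
      have h_tc2 : 0 ≤ t * (c * 2 * Set.indicator U (fun _ => (1 : ℝ)) p.1) *
          (c * 2 * Set.indicator U (fun _ => (1 : ℝ)) p.2) :=
        mul_nonneg h_tc1 (mul_nonneg c2 hi2)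
      exact mul_le_mul (mul_le_mul (mul_le_mul hm hg1 n1 htpos.le) hg2 n2 h_tc1) hg3 n3 h_tc2
    calc _ ≤ _ := step
      _ = t * (c * 2) ^ 3 * Set.indicator U (fun _ => (1 : ℝ)) p.1 *
            Set.indicator U (fun _ => (1 : ℝ)) p.2 := by ring
  have hD_int : Integrable (fun p : ℝ × ℝ =>
      (t * (c * 2) ^ 3 * Set.indicator U (fun _ => (1 : ℝ)) p.1) *
        Set.indicator U (fun _ => (1 : ℝ)) p.2) := by
    rw [MeasureTheory.Measure.volume_eq_prod ℝ ℝ]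
    exact (hind_int.const_mul _).mul_prod hind_int
  have hFint : Integrable F := hD_int.mono' hFmeas.aestronglyMeasurable (ae_of_all _ hbound)
  set A : Set ℝ := Set.Icc ((k : ℝ) + 1 / 8) ((k : ℝ) + 5 / 32) with hA_def
  set B : Set ℝ := Set.Icc (-2 * (k : ℝ) + 13 / 32) (-2 * (k : ℝ) + 14 / 32) with hB_def
  have h_im_low : ∀ p : ℝ × ℝ,
      (t / 2 * c ^ 3 * Set.indicator A (fun _ => (1 : ℝ)) p.1) *
        Set.indicator B (fun _ => (1 : ℝ)) p.2 ≤ (F p).im := by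
    intro p
    have him : (F p).im = Real.sin (2 * t * (ξ - p.1) * (ξ - p.2)) / (2 * (ξ - p.1) * (ξ - p.2))
        * (gfun s k p.1 * gfun s k p.2 * gfun s k (ξ - p.1 - p.2)) := by
      simp only [hF_def]
      rw [im_mul_ofReal3, mult_im]
    by_cases hp : p.1 ∈ A ∧ p.2 ∈ B
    · obtain ⟨hp1, hp2⟩ := hp
      rw [Set.indicator_of_mem hp1, Set.indicator_of_mem hp2, mul_one, mul_one, him]
      rw [hA_def, Set.mem_Icc] at hp1
      rw [hB_def, Set.mem_Icc] at hp2
      have hx1 : p.1 ∈ Set.Icc ((k : ℝ) + 1 / 8) ((k : ℝ) + 1 / 4) := by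
        rw [Set.mem_Icc]; constructor <;> linarith [hp1.1, hp1.2]
      have hx2 : p.2 ∈ Set.Icc (-2 * (k : ℝ) + 1 / 4) (-2 * (k : ℝ) + 1 / 2) := by
        rw [Set.mem_Icc]; constructor <;> linarith [hp2.1, hp2.2]
      have hx3 : ξ - p.1 - p.2 ∈ Set.Icc ((k : ℝ) + 1 / 8) ((k : ℝ) + 1 / 4) := by
        rw [Set.mem_Icc]; constructor <;> linarith [hp1.1, hp1.2, hp2.1, hp2.2]
      have hg1 := g_ge_one s k p.1 hx1
      have hg2 := g_ge_two s k p.2 hx2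
      have hg3 := g_ge_one s k (ξ - p.1 - p.2) hx3
      rw [← hc_def] at hg1 hg2 hg3
      have hneg : ξ - p.1 ≤ -(k:ℝ) + 21/32 := by linarith [hp1.1]
      have hneg2 : -(k:ℝ) + 18/32 ≤ ξ - p.1 := by linarith [hp1.2]
      have hb1 : 2*(k:ℝ) + 9/32 ≤ ξ - p.2 := by linarith [hp2.2]
      have hb2 : ξ - p.2 ≤ 2*(k:ℝ) + 12/32 := by linarith [hp2.1]
      have hapos : 0 < -(ξ - p.1) := by linarith
      have hbpos : 0 < ξ - p.2 := by linarith
      have hdpos : 0 < 2 * (-(ξ - p.1)) * (ξ - p.2) :=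
        mul_pos (mul_pos two_pos hapos) hbpos
      have hdle : 2 * (-(ξ - p.1)) * (ξ - p.2) ≤ 6 * (k:ℝ)^2 := by nlinarith
      have hx_le : t * (2 * (-(ξ - p.1)) * (ξ - p.2)) ≤ 1/2 := by
        calc t * (2 * (-(ξ - p.1)) * (ξ - p.2)) ≤ t * (6*(k:ℝ)^2) := by nlinarith
          _ = 1/2 := by
              rw [show t*(6*(k:ℝ)^2) = 6*(t*(k:ℝ)^2) by ring, htk]; norm_num
      have hxpos : 0 < t * (2 * (-(ξ - p.1)) * (ξ - p.2)) := mul_pos htpos hdpos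
      have hsin : t * (2 * (-(ξ - p.1)) * (ξ - p.2)) / 2
          ≤ Real.sin (t * (2 * (-(ξ - p.1)) * (ξ - p.2))) := by
        have h1 := Real.mul_le_sin (x := t * (2 * (-(ξ - p.1)) * (ξ - p.2))) hxpos.le
          (by linarith [Real.pi_gt_three])
        have h4 : (1:ℝ)/2 ≤ 2/π := by
          rw [div_le_div_iff₀ two_pos Real.pi_pos]; linarith [Real.pi_le_four]
        nlinarith [h1, h4, hxpos.le]
      have hkey : t / 2 ≤ Real.sin (2 * t * (ξ - p.1) * (ξ - p.2))
          / (2 * (ξ - p.1) * (ξ - p.2)) := by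
        have e2 : 2 * t * (ξ - p.1) * (ξ - p.2)
            = -(t * (2 * (-(ξ - p.1)) * (ξ - p.2))) := by ring
        have e3 : 2 * (ξ - p.1) * (ξ - p.2) = -(2 * (-(ξ - p.1)) * (ξ - p.2)) := by ring
        rw [e2, e3, Real.sin_neg, neg_div_neg_eq, le_div_iff₀ hdpos]
        calc t / 2 * (2 * (-(ξ - p.1)) * (ξ - p.2))
            = t * (2 * (-(ξ - p.1)) * (ξ - p.2)) / 2 := by ring
          _ ≤ _ := hsin
      have hggg : c ^ 3 ≤ gfun s k p.1 * gfun s k p.2 * gfun s k (ξ - p.1 - p.2) := by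
        have h12 : c * c ≤ gfun s k p.1 * gfun s k p.2 :=
          mul_le_mul hg1 hg2 hcpos.le (le_trans hcpos.le hg1)
        calc c ^ 3 = (c * c) * c := by ring
          _ ≤ (gfun s k p.1 * gfun s k p.2) * gfun s k (ξ - p.1 - p.2) :=
              mul_le_mul h12 hg3 hcpos.le
                (mul_nonneg (g_nonneg s k p.1) (g_nonneg s k p.2))
      have hc3 : (0:ℝ) ≤ c ^ 3 := by positivity
      calc t / 2 * c ^ 3 ≤ (Real.sin (2 * t * (ξ - p.1) * (ξ - p.2))
            / (2 * (ξ - p.1) * (ξ - p.2))) *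
            (gfun s k p.1 * gfun s k p.2 * gfun s k (ξ - p.1 - p.2)) :=
          mul_le_mul hkey hggg hc3 (le_trans (by positivity) hkey)
        _ = _ := rfl
    · have hz : (t / 2 * c ^ 3 * Set.indicator A (fun _ => (1 : ℝ)) p.1) *
          Set.indicator B (fun _ => (1 : ℝ)) p.2 = 0 := by
        rcases not_and_or.1 hp with h | h
        · rw [Set.indicator_of_notMem h]; ring
        · rw [Set.indicator_of_notMem h]; ring
      rw [hz, him]
      by_cases hg : gfun s k p.1 = 0 ∨ gfun s k p.2 = 0
      · have hzz : gfun s k p.1 * gfun s k p.2 * gfun s k (ξ - p.1 - p.2) = 0 := by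
          rcases hg with h | h <;> rw [h] <;> ring
        rw [hzz, mul_zero]
      · push_neg at hg
        have h1 := g_support s k p.1 hg.1
        have h2 := g_support s k p.2 hg.2
        rw [abs_le] at h1 h2
        have ha : |ξ - p.1| ≤ 3 * (k:ℝ) := by
          rw [abs_le]; constructor <;> linarith [h1.1, h1.2]
        have hb : |ξ - p.2| ≤ 3 * (k:ℝ) := by
          rw [abs_le]; constructor <;> linarith [h2.1, h2.2]
        apply mul_nonneg _ (mul_nonneg (mul_nonneg (g_nonneg s k p.1) (g_nonneg s k p.2))
          (g_nonneg s k _))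
        have hy : |2 * t * (ξ - p.1) * (ξ - p.2)| ≤ 3 / 2 := by
          have hprod : |(ξ-p.1) * (ξ-p.2)| ≤ 9 * (k:ℝ)^2 := by
            rw [abs_mul]
            nlinarith [abs_nonneg (ξ-p.1), abs_nonneg (ξ-p.2)]
          have h2t : |2 * t| = 2 * t := abs_of_nonneg (by positivity)
          calc |2 * t * (ξ - p.1) * (ξ - p.2)|
              = |2 * t| * |(ξ-p.1) * (ξ-p.2)| := by
                rw [← abs_mul]; congr 1; ring
            _ ≤ (2 * t) * (9 * (k:ℝ)^2) := by
                rw [h2t]; exact mul_le_mul_of_nonneg_left hprod (by positivity)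
            _ = 3 / 2 := by
                rw [show 2*t*(9*(k:ℝ)^2) = 18*(t*(k:ℝ)^2) by ring, htk]; norm_num
        rw [abs_le] at hy
        rcases lt_trichotomy (2 * (ξ - p.1) * (ξ - p.2)) 0 with hm | hm | hm
        · refine div_nonneg_iff.2 (Or.inr ⟨?_, hm.le⟩)
          apply Real.sin_nonpos_of_nonpos_of_neg_pi_le
          · nlinarith
          · linarith [Real.pi_gt_three, hy.1]
        · rw [show (2 : ℝ) * (ξ - p.1) * (ξ - p.2) = 2 * (ξ - p.1) * (ξ - p.2) from rfl, hm,
            div_zero]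
        · apply div_nonneg _ hm.le
          apply Real.sin_nonneg_of_nonneg_of_le_pi
          · nlinarith
          · linarith [Real.pi_gt_three, hy.2]
  have hAmeas : MeasurableSet A := hA_def ▸ measurableSet_Icc
  have hBmeas : MeasurableSet B := hB_def ▸ measurableSet_Icc
  have hAvol : volume A < ⊤ := hA_def ▸ measure_Icc_lt_top
  have hBvol : volume B < ⊤ := hB_def ▸ measure_Icc_lt_top
  have hA1 : Integrable (fun x : ℝ => Set.indicator A (fun _ => (1 : ℝ)) x) :=
    (integrable_indicator_iff hAmeas).2 (integrableOn_const hAvol.ne)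
  have hB1 : Integrable (fun x : ℝ => Set.indicator B (fun _ => (1 : ℝ)) x) :=
    (integrable_indicator_iff hBmeas).2 (integrableOn_const hBvol.ne)
  have hA_int : Integrable (fun p : ℝ × ℝ =>
      (t / 2 * c ^ 3 * Set.indicator A (fun _ => (1 : ℝ)) p.1) *
        Set.indicator B (fun _ => (1 : ℝ)) p.2) := by
    rw [MeasureTheory.Measure.volume_eq_prod ℝ ℝ]
    exact (hA1.const_mul _).mul_prod hB1
  have hvolA : (volume A).toReal = 1/32 := by
    rw [hA_def, Real.volume_Icc, show ((k:ℝ) + 5/32 - ((k:ℝ) + 1/8)) = 1/32 by ring]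
    exact ENNReal.toReal_ofReal (by norm_num)
  have hvolB : (volume B).toReal = 1/32 := by
    rw [hB_def, Real.volume_Icc,
      show (-2*(k:ℝ) + 14/32 - (-2*(k:ℝ) + 13/32)) = 1/32 by ring]
    exact ENNReal.toReal_ofReal (by norm_num)
  have hint_low : ∫ p : ℝ × ℝ, ((t / 2 * c ^ 3 * Set.indicator A (fun _ => (1:ℝ)) p.1) *
      Set.indicator B (fun _ => (1:ℝ)) p.2) = t / 2 * c ^ 3 * (1/32) * (1/32) := by
    rw [MeasureTheory.Measure.volume_eq_prod ℝ ℝ]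
    calc (∫ p : ℝ × ℝ, ((t / 2 * c ^ 3 * Set.indicator A (fun _ => (1:ℝ)) p.1) *
          Set.indicator B (fun _ => (1:ℝ)) p.2) ∂((volume : Measure ℝ).prod volume))
        = (∫ x : ℝ, t / 2 * c ^ 3 * Set.indicator A (fun _ => (1:ℝ)) x) *
            ∫ y : ℝ, Set.indicator B (fun _ => (1:ℝ)) y :=
          MeasureTheory.integral_prod_mul
            (f := fun x : ℝ => t / 2 * c ^ 3 * Set.indicator A (fun _ => (1:ℝ)) x)
            (g := fun y : ℝ => Set.indicator B (fun _ => (1:ℝ)) y)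
      _ = t / 2 * c ^ 3 * (1/32) * (1/32) := by
          rw [MeasureTheory.integral_const_mul, MeasureTheory.integral_indicator_const _ hAmeas,
            MeasureTheory.integral_indicator_const _ hBmeas, measureReal_def, measureReal_def, hvolA, hvolB]
          simp only [smul_eq_mul, mul_one]
          try ring
  have hnorm_ge : t / 2 * c ^ 3 / 1024 ≤ ‖∫ p : ℝ × ℝ, F p‖ := by
    have h1 : (∫ p : ℝ × ℝ, ((t / 2 * c ^ 3 * Set.indicator A (fun _ => (1:ℝ)) p.1) *
        Set.indicator B (fun _ => (1:ℝ)) p.2)) ≤ ∫ p : ℝ × ℝ, (F p).im :=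
      integral_mono hA_int hFint.im h_im_low
    rw [hint_low] at h1
    have h2 : (∫ p : ℝ × ℝ, (F p).im) = (∫ p : ℝ × ℝ, F p).im := integral_im hFint
    have h3 : (∫ p : ℝ × ℝ, F p).im ≤ ‖∫ p : ℝ × ℝ, F p‖ := by
      exact Complex.im_le_norm _
    calc t / 2 * c ^ 3 / 1024 = t / 2 * c ^ 3 * (1/32) * (1/32) := by ring
      _ ≤ ∫ p : ℝ × ℝ, (F p).im := h1
      _ = (∫ p : ℝ × ℝ, F p).im := h2
      _ ≤ ‖∫ p : ℝ × ℝ, F p‖ := h3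
  have hχ : Set.indicator (Set.Icc (1/2:ℝ) 1) (fun _ => (1:ℝ)) ξ = 1 :=
    Set.indicator_of_mem (by rw [Set.mem_Icc]; constructor <;> linarith) _
  have hR : Rfun s k t ξ = ‖∫ p : ℝ × ℝ, F p‖ := by
    unfold Rfun
    rw [hχ, one_mul]
  rw [hR]
  exact hnorm_ge

lemma Fmeas2 (s t : ℝ) (k : ℕ) :
    Measurable (fun q : ℝ × (ℝ × ℝ) =>
      (Complex.exp (2 * Complex.I * (t : ℂ) * ((q.1 - q.2.1 : ℝ) : ℂ) * ((q.1 - q.2.2 : ℝ) : ℂ))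
          - 1) / (2 * ((q.1 - q.2.1 : ℝ) : ℂ) * ((q.1 - q.2.2 : ℝ) : ℂ))
        * ((gfun s k q.2.1 : ℝ) : ℂ) * ((gfun s k q.2.2 : ℝ) : ℂ)
        * ((gfun s k (q.1 - q.2.1 - q.2.2) : ℝ) : ℂ)) := by
  have m1 : Measurable (fun q : ℝ × (ℝ × ℝ) => q.1 - q.2.1) :=
    measurable_fst.sub (measurable_fst.comp measurable_snd)
  have m2 : Measurable (fun q : ℝ × (ℝ × ℝ) => q.1 - q.2.2) :=
    measurable_fst.sub (measurable_snd.comp measurable_snd)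
  have h1 : Measurable (fun q : ℝ × (ℝ × ℝ) => ((q.1 - q.2.1 : ℝ) : ℂ)) :=
    Complex.measurable_ofReal.comp m1
  have h2 : Measurable (fun q : ℝ × (ℝ × ℝ) => ((q.1 - q.2.2 : ℝ) : ℂ)) :=
    Complex.measurable_ofReal.comp m2
  have hnum : Measurable (fun q : ℝ × (ℝ × ℝ) =>
      Complex.exp (2 * Complex.I * (t : ℂ) * ((q.1 - q.2.1 : ℝ) : ℂ) * ((q.1 - q.2.2 : ℝ) : ℂ))
        - 1) :=
    (Complex.measurable_exp.comp (((measurable_const.mul h1).mul h2))).sub measurable_const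
  have hden : Measurable (fun q : ℝ × (ℝ × ℝ) =>
      2 * ((q.1 - q.2.1 : ℝ) : ℂ) * ((q.1 - q.2.2 : ℝ) : ℂ)) :=
    (measurable_const.mul h1).mul h2
  have hg1 : Measurable (fun q : ℝ × (ℝ × ℝ) => ((gfun s k q.2.1 : ℝ) : ℂ)) :=
    Complex.measurable_ofReal.comp ((g_measurable s k).comp
      (measurable_fst.comp measurable_snd))
  have hg2 : Measurable (fun q : ℝ × (ℝ × ℝ) => ((gfun s k q.2.2 : ℝ) : ℂ)) :=
    Complex.measurable_ofReal.comp ((g_measurable s k).comp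
      (measurable_snd.comp measurable_snd))
  have hg3 : Measurable (fun q : ℝ × (ℝ × ℝ) => ((gfun s k (q.1 - q.2.1 - q.2.2) : ℝ) : ℂ)) :=
    Complex.measurable_ofReal.comp ((g_measurable s k).comp (m1.sub
      (measurable_snd.comp measurable_snd)))
  exact (((hnum.div hden).mul hg1).mul hg2).mul hg3

lemma Fbound (s t ξ : ℝ) (ht : 0 ≤ t) (k : ℕ) (p : ℝ × ℝ) :
    ‖(Complex.exp (2 * Complex.I * (t : ℂ) * ((ξ - p.1 : ℝ) : ℂ) * ((ξ - p.2 : ℝ) : ℂ)) - 1)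
          / (2 * ((ξ - p.1 : ℝ) : ℂ) * ((ξ - p.2 : ℝ) : ℂ))
        * ((gfun s k p.1 : ℝ) : ℂ) * ((gfun s k p.2 : ℝ) : ℂ)
        * ((gfun s k (ξ - p.1 - p.2) : ℝ) : ℂ)‖ ≤
      (t * ((2 : ℝ) ^ (-s * (k : ℝ) / 2) * 2) ^ 3 *
          Set.indicator (Set.Icc ((k : ℝ) + 1 / 8) ((k : ℝ) + 1 / 4) ∪
            Set.Icc (-2 * (k : ℝ) + 1 / 4) (-2 * (k : ℝ) + 1 / 2)) (fun _ => (1 : ℝ)) p.1) *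
        Set.indicator (Set.Icc ((k : ℝ) + 1 / 8) ((k : ℝ) + 1 / 4) ∪
          Set.Icc (-2 * (k : ℝ) + 1 / 4) (-2 * (k : ℝ) + 1 / 2)) (fun _ => (1 : ℝ)) p.2 := by
  set c : ℝ := (2 : ℝ) ^ (-s * (k : ℝ) / 2) with hc_def
  have hcpos : 0 < c := Real.rpow_pos_of_pos (by norm_num) _
  set U : Set ℝ := Set.Icc ((k : ℝ) + 1 / 8) ((k : ℝ) + 1 / 4) ∪
      Set.Icc (-2 * (k : ℝ) + 1 / 4) (-2 * (k : ℝ) + 1 / 2) with hU_def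
  have e1 : ‖(Complex.exp (2 * Complex.I * (t : ℂ) * ((ξ - p.1 : ℝ) : ℂ) * ((ξ - p.2 : ℝ) : ℂ))
        - 1) / (2 * ((ξ - p.1 : ℝ) : ℂ) * ((ξ - p.2 : ℝ) : ℂ))
      * ((gfun s k p.1 : ℝ) : ℂ) * ((gfun s k p.2 : ℝ) : ℂ)
      * ((gfun s k (ξ - p.1 - p.2) : ℝ) : ℂ)‖
      = ‖(Complex.exp (2 * Complex.I * (t : ℂ) * ((ξ - p.1 : ℝ) : ℂ) *
          ((ξ - p.2 : ℝ) : ℂ)) - 1) / (2 * ((ξ - p.1 : ℝ) : ℂ) * ((ξ - p.2 : ℝ) : ℂ))‖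
        * gfun s k p.1 * gfun s k p.2 * gfun s k (ξ - p.1 - p.2) := by
    simp only [norm_mul, Complex.norm_real, Real.norm_eq_abs]
    rw [abs_of_nonneg (g_nonneg s k p.1), abs_of_nonneg (g_nonneg s k p.2),
      abs_of_nonneg (g_nonneg s k (ξ - p.1 - p.2))]
  rw [e1]
  have hm := mult_norm_le t (ξ - p.1) (ξ - p.2) ht
  have hg1 := g_le_ind s k p.1
  have hg2 := g_le_ind s k p.2
  have hg3 := g_le_const s k (ξ - p.1 - p.2)
  rw [← hU_def, ← hc_def] at hg1 hg2
  rw [← hc_def] at hg3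
  have hi1 := ind_nonneg U p.1
  have hi2 := ind_nonneg U p.2
  have n1 := g_nonneg s k p.1
  have n2 := g_nonneg s k p.2
  have n3 := g_nonneg s k (ξ - p.1 - p.2)
  have c2 : (0:ℝ) ≤ c * 2 := by positivity
  have h_tc1 : 0 ≤ t * (c * 2 * Set.indicator U (fun _ => (1 : ℝ)) p.1) :=
    mul_nonneg ht (mul_nonneg c2 hi1)
  have h_tc2 : 0 ≤ t * (c * 2 * Set.indicator U (fun _ => (1 : ℝ)) p.1) *
      (c * 2 * Set.indicator U (fun _ => (1 : ℝ)) p.2) :=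
    mul_nonneg h_tc1 (mul_nonneg c2 hi2)
  calc _ ≤ ((t * (c * 2 * Set.indicator U (fun _ => (1 : ℝ)) p.1)) *
        (c * 2 * Set.indicator U (fun _ => (1 : ℝ)) p.2)) * (c * 2) :=
      mul_le_mul (mul_le_mul (mul_le_mul hm hg1 n1 ht) hg2 n2 h_tc1) hg3 n3 h_tc2
    _ = (t * (c * 2) ^ 3 * Set.indicator U (fun _ => (1 : ℝ)) p.1) *
          Set.indicator U (fun _ => (1 : ℝ)) p.2 := by ring

/-- For `s < 0` and any `s', σ'` there exist `κ ∈ (0,1)` and `k₀` such that for all integers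
`k ≥ k₀`, with `t = κ/k²`, the `E^{s'}_{σ'}`-type weighted `L²` norm of `R_{k,t}` is at least
`2^{−sk/2}`. -/
theorem stmt_16 (s : ℝ) (hs : s < 0) (s' σ' : ℝ) :
    ∃ κ ∈ Set.Ioo (0 : ℝ) 1, ∃ k₀ : ℕ, ∀ k : ℕ, k₀ ≤ k →
      (2 : ℝ) ^ (-s * (k : ℝ) / 2) ≤
        (∫ ξ : ℝ, (1 + ξ ^ 2) ^ σ' * (2 : ℝ) ^ (2 * s' * |ξ|)
          * Rfun s k (κ / (k : ℝ) ^ 2) ξ ^ 2) ^ (1 / 2 : ℝ) := by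
  refine ⟨1/12, ⟨by norm_num, by norm_num⟩, ?_⟩
  set W : ℝ := min 1 ((2:ℝ)^σ') * min 1 ((2:ℝ)^(2*s')) with hW_def
  have hWpos : 0 < W := mul_pos (lt_min one_pos (Real.rpow_pos_of_pos two_pos _))
    (lt_min one_pos (Real.rpow_pos_of_pos two_pos _))
  set Wmax : ℝ := max 1 ((2:ℝ)^σ') * max 1 ((2:ℝ)^(2*s')) with hWmax_def
  set ρ : ℝ := (2:ℝ)^(2*s) with hρ_def
  have hρ0 : 0 ≤ ρ := (Real.rpow_pos_of_pos two_pos _).le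
  have hρ1 : ρ < 1 := Real.rpow_lt_one_of_one_lt_of_neg one_lt_two (by linarith)
  have htend := tendsto_pow_const_mul_const_pow_of_lt_one 4 hρ0 hρ1
  set ε : ℝ := W / (16 * 24576^2) with hε_def
  have hεpos : 0 < ε := by positivity
  have hev : ∀ᶠ (n : ℕ) in Filter.atTop, (n:ℝ)^4 * ρ^n < ε :=
    htend.eventually (gt_mem_nhds hεpos)
  obtain ⟨k₁, hk₁⟩ := Filter.eventually_atTop.1 hev
  refine ⟨max k₁ 2, fun k hk => ?_⟩
  have hk2 : 2 ≤ k := le_trans (le_max_right _ _) hk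
  have hkk1 : k₁ ≤ k := le_trans (le_max_left _ _) hk
  have hk2' : (2:ℝ) ≤ (k:ℝ) := by exact_mod_cast hk2
  have hkpos : (0:ℝ) < (k:ℝ) := by linarith
  set t : ℝ := 1/12/(k:ℝ)^2 with ht_def
  have htpos : 0 < t := by positivity
  set c : ℝ := (2:ℝ)^(-s*(k:ℝ)/2) with hc_def
  have hcpos : 0 < c := Real.rpow_pos_of_pos (by norm_num) _
  set L : ℝ := t / 2 * c^3 / 1024 with hL_def
  have hLpos : 0 < L := by positivity
  set H : ℝ → ℝ := fun ξ => (1 + ξ ^ 2) ^ σ' * (2 : ℝ) ^ (2 * s' * |ξ|)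
    * Rfun s k t ξ ^ 2 with hH_def
  -- nonnegativity
  have hRnonneg : ∀ ξ, 0 ≤ Rfun s k t ξ := by
    intro ξ
    unfold Rfun
    exact mul_nonneg (ind_nonneg _ _) (norm_nonneg _)
  have h_nonneg : ∀ ξ, 0 ≤ H ξ := by
    intro ξ
    simp only [hH_def]
    have h1 : (0:ℝ) < (1 + ξ^2)^σ' := Real.rpow_pos_of_pos (by positivity) _
    have h2 : (0:ℝ) < (2:ℝ)^(2*s'*|ξ|) := Real.rpow_pos_of_pos two_pos _
    positivity
  -- measurability
  have hRmeas : Measurable (fun ξ => Rfun s k t ξ) := by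
    unfold Rfun
    apply Measurable.mul (measurable_const.indicator measurableSet_Icc)
    have hj := ((Fmeas2 s t k).stronglyMeasurable.integral_prod_right'
      (ν := (volume : Measure (ℝ × ℝ)))).measurable
    exact hj.norm
  have hw_meas : Measurable (fun ξ : ℝ => (1 + ξ ^ 2) ^ σ' * (2 : ℝ) ^ (2 * s' * |ξ|)) := by
    apply Measurable.mul
    · apply Continuous.measurable
      apply Continuous.rpow_const (by continuity)
      intro x
      left
      positivity
    · apply Continuous.measurable
      have h1 : Continuous (fun ξ : ℝ => 2 * s' * |ξ|) := by continuity
      have h2 : Continuous (fun y : ℝ => (2:ℝ) ^ y) :=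
        continuous_iff_continuousAt.2 (fun y => continuousAt_const_rpow (by norm_num))
      exact h2.comp h1
  have hHmeas : Measurable H := by
    simp only [hH_def]
    exact hw_meas.mul (hRmeas.pow_const 2)
  -- uniform upper bound on Rfun
  set U : Set ℝ := Set.Icc ((k : ℝ) + 1 / 8) ((k : ℝ) + 1 / 4) ∪
      Set.Icc (-2 * (k : ℝ) + 1 / 4) (-2 * (k : ℝ) + 1 / 2) with hU_def
  have hUmeas : MeasurableSet U := measurableSet_Icc.union measurableSet_Icc
  have hUvol : volume U < ⊤ :=
    lt_of_le_of_lt (measure_union_le _ _)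
      (ENNReal.add_lt_top.2 ⟨measure_Icc_lt_top, measure_Icc_lt_top⟩)
  have hind_int : Integrable (fun x : ℝ => Set.indicator U (fun _ => (1 : ℝ)) x) :=
    (integrable_indicator_iff hUmeas).2 (integrableOn_const hUvol.ne)
  have hD_int : Integrable (fun p : ℝ × ℝ =>
      (t * (c * 2) ^ 3 * Set.indicator U (fun _ => (1 : ℝ)) p.1) *
        Set.indicator U (fun _ => (1 : ℝ)) p.2) := by
    rw [MeasureTheory.Measure.volume_eq_prod ℝ ℝ]
    exact (hind_int.const_mul _).mul_prod hind_int
  set M : ℝ := ∫ p : ℝ × ℝ, ((t * (c * 2) ^ 3 * Set.indicator U (fun _ => (1 : ℝ)) p.1) *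
      Set.indicator U (fun _ => (1 : ℝ)) p.2) with hM_def
  have hM0 : 0 ≤ M := by
    rw [hM_def]
    apply integral_nonneg
    intro p
    exact mul_nonneg (mul_nonneg (by positivity) (ind_nonneg _ _)) (ind_nonneg _ _)
  have hRle : ∀ ξ, Rfun s k t ξ ≤ M := by
    intro ξ
    unfold Rfun
    calc Set.indicator (Set.Icc (1 / 2 : ℝ) 1) (fun _ => (1 : ℝ)) ξ * ‖_‖
        ≤ 1 * ‖_‖ := mul_le_mul_of_nonneg_right (ind_le_one _ _) (norm_nonneg _)
      _ = _ := one_mul _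
      _ ≤ M := by
          rw [hM_def]
          exact norm_integral_le_of_norm_le hD_int
            (Filter.Eventually.of_forall (fun p => Fbound s t ξ htpos.le k p))
  -- integrability of H
  have hχ_int : Integrable (fun ξ : ℝ =>
      (Wmax * M^2) * Set.indicator (Set.Icc (1/2:ℝ) 1) (fun _ => (1:ℝ)) ξ) :=
    (((integrable_indicator_iff measurableSet_Icc).2
      (integrableOn_const measure_Icc_lt_top.ne))).const_mul _
  have hHle : ∀ ξ, ‖H ξ‖ ≤ (Wmax * M^2) * Set.indicator (Set.Icc (1/2:ℝ) 1)
      (fun _ => (1:ℝ)) ξ := by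
    intro ξ
    rw [Real.norm_eq_abs, abs_of_nonneg (h_nonneg ξ)]
    by_cases hmem : ξ ∈ Set.Icc (1/2:ℝ) 1
    · rw [Set.indicator_of_mem hmem, mul_one]
      rw [Set.mem_Icc] at hmem
      have habs : |ξ| ≤ 1 := by rw [abs_le]; constructor <;> linarith [hmem.1, hmem.2]
      have hw1 : (1 + ξ^2)^σ' ≤ max 1 ((2:ℝ)^σ') := by
        rcases le_or_gt 0 σ' with h | h
        · refine le_trans ?_ (le_max_right _ _)
          refine Real.rpow_le_rpow (by positivity) ?_ h
          nlinarith [abs_nonneg ξ, sq_abs ξ]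
        · refine le_trans ?_ (le_max_left _ _)
          have h1 : (1:ℝ) ≤ 1 + ξ^2 := by nlinarith [sq_nonneg ξ]
          calc (1 + ξ^2)^σ' ≤ 1^σ' :=
              Real.rpow_le_rpow_of_nonpos one_pos h1 h.le
            _ = 1 := Real.one_rpow _
      have hw2 : (2:ℝ)^(2*s'*|ξ|) ≤ max 1 ((2:ℝ)^(2*s')) := by
        rcases le_or_gt 0 s' with h | h
        · refine le_trans ?_ (le_max_right _ _)
          apply Real.rpow_le_rpow_of_exponent_le one_le_two
          nlinarith [abs_nonneg ξ]
        · refine le_trans ?_ (le_max_left _ _)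
          apply Real.rpow_le_one_of_one_le_of_nonpos one_le_two
          nlinarith [abs_nonneg ξ]
      have hsq : Rfun s k t ξ ^ 2 ≤ M^2 :=
        pow_le_pow_left₀ (hRnonneg ξ) (hRle ξ) 2
      simp only [hH_def]
      have hwpos1 : (0:ℝ) ≤ (1 + ξ^2)^σ' := (Real.rpow_pos_of_pos (by positivity) _).le
      have hwpos2 : (0:ℝ) ≤ (2:ℝ)^(2*s'*|ξ|) := (Real.rpow_pos_of_pos two_pos _).le
      have hwle : (1 + ξ^2)^σ' * (2:ℝ)^(2*s'*|ξ|) ≤ Wmax := by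
        rw [hWmax_def]
        apply mul_le_mul hw1 hw2 hwpos2 (le_trans hwpos1 hw1)
      apply mul_le_mul hwle hsq (by positivity) (le_trans (mul_nonneg hwpos1 hwpos2) hwle)
    · rw [Set.indicator_of_notMem hmem, mul_zero]
      have hR0 : Rfun s k t ξ = 0 := by
        unfold Rfun
        rw [Set.indicator_of_notMem hmem, zero_mul]
      simp only [hH_def]
      rw [hR0]
      norm_num
  have hH_int : Integrable H :=
    hχ_int.mono' hHmeas.aestronglyMeasurable (Filter.Eventually.of_forall hHle)
  -- lower bound over Q
  have hQmeas : MeasurableSet (Set.Icc (23/32:ℝ) (25/32)) := measurableSet_Icc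
  have hptwise : ∀ ξ ∈ Set.Icc (23/32:ℝ) (25/32), W * L^2 ≤ H ξ := by
    intro ξ hξ
    have hkey := key s k hk2 ξ hξ
    rw [Set.mem_Icc] at hξ
    have habs : |ξ| ≤ 1 := by rw [abs_le]; constructor <;> linarith [hξ.1, hξ.2]
    have hw1 : min 1 ((2:ℝ)^σ') ≤ (1 + ξ^2)^σ' := by
      rcases le_or_gt 0 σ' with h | h
      · refine le_trans (min_le_left _ _) ?_
        exact Real.one_le_rpow (by nlinarith [sq_nonneg ξ]) h
      · refine le_trans (min_le_right _ _) ?_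
        apply Real.rpow_le_rpow_of_nonpos (by positivity) _ h.le
        nlinarith [abs_nonneg ξ, sq_abs ξ]
    have hw2 : min 1 ((2:ℝ)^(2*s')) ≤ (2:ℝ)^(2*s'*|ξ|) := by
      rcases le_or_gt 0 s' with h | h
      · refine le_trans (min_le_left _ _) ?_
        apply Real.one_le_rpow one_le_two
        positivity
      · refine le_trans (min_le_right _ _) ?_
        apply Real.rpow_le_rpow_of_exponent_le one_le_two
        nlinarith [abs_nonneg ξ]
    have hwge : W ≤ (1 + ξ^2)^σ' * (2:ℝ)^(2*s'*|ξ|) := by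
      rw [hW_def]
      apply mul_le_mul hw1 hw2 (le_min (by norm_num) (Real.rpow_pos_of_pos two_pos _).le)
        (le_trans (le_min (by norm_num) (Real.rpow_pos_of_pos two_pos _).le) hw1)
    have hsq : L^2 ≤ Rfun s k t ξ ^ 2 := by
      apply pow_le_pow_left₀ hLpos.le _ 2
      calc L = 1 / 12 / (k : ℝ) ^ 2 / 2 * ((2 : ℝ) ^ (-s * (k : ℝ) / 2)) ^ 3 / 1024 := by
            rw [hL_def, ht_def, hc_def]
        _ ≤ Rfun s k (1 / 12 / (k : ℝ) ^ 2) ξ := hkey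
        _ = Rfun s k t ξ := by rw [← ht_def]
    simp only [hH_def]
    exact mul_le_mul hwge hsq (by positivity)
      (le_trans hWpos.le hwge)
  have hQvol : (volume (Set.Icc (23/32:ℝ) (25/32))).toReal = 1/16 := by
    rw [Real.volume_Icc, show (25/32 - 23/32 : ℝ) = 1/16 by norm_num]
    exact ENNReal.toReal_ofReal (by norm_num)
  have hlow : W * L^2 * (1/16) ≤ ∫ ξ, H ξ := by
    have h2 := MeasureTheory.setIntegral_ge_of_const_le hQmeas
      (by rw [Real.volume_Icc]; exact ENNReal.ofReal_ne_top) hptwise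
      (hH_int.integrableOn)
    rw [measureReal_def, hQvol, smul_eq_mul] at h2
    calc W * L^2 * (1/16) ≤ ∫ ξ in Set.Icc (23/32:ℝ) (25/32), H ξ := by linarith
      _ ≤ ∫ ξ, H ξ := setIntegral_le_integral hH_int
          (Filter.Eventually.of_forall h_nonneg)
  -- numeric endgame
  have hρc : ρ^k * c^4 = 1 := by
    rw [hρ_def, hc_def, ← Real.rpow_natCast ((2:ℝ)^(2*s)) k,
      ← Real.rpow_natCast ((2:ℝ)^(-s*(k:ℝ)/2)) 4,
      ← Real.rpow_mul (by norm_num : (0:ℝ) ≤ 2), ← Real.rpow_mul (by norm_num : (0:ℝ) ≤ 2),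
      ← Real.rpow_add (by norm_num : (0:ℝ) < 2),
      show 2*s*(k:ℝ) + -s*(k:ℝ)/2*(4:ℕ) = 0 by push_cast; ring, Real.rpow_zero]
  have hk4 : (k:ℝ)^4 * ρ^k < ε := hk₁ k hkk1
  have hfinal : (16 * 24576^2 : ℝ) * (k:ℝ)^4 < W * c^4 := by
    have hstep : (16 * 24576^2 : ℝ) * ((k:ℝ)^4 * ρ^k) * c^4 < 16*24576^2 * ε * c^4 :=
      mul_lt_mul_of_pos_right (mul_lt_mul_of_pos_left hk4 (by norm_num)) (by positivity)
    have hεW : (16 * 24576^2 : ℝ) * ε = W := by rw [hε_def]; field_simp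
    have hL1 : (16 * 24576^2 : ℝ) * ((k:ℝ)^4 * ρ^k) * c^4 = 16*24576^2*(k:ℝ)^4 := by
      rw [show (16 * 24576^2 : ℝ) * ((k:ℝ)^4 * ρ^k) * c^4
        = 16*24576^2*(k:ℝ)^4 * (ρ^k * c^4) by ring, hρc, mul_one]
    calc (16 * 24576^2 : ℝ) * (k:ℝ)^4 = 16*24576^2 * ((k:ℝ)^4 * ρ^k) * c^4 := hL1.symm
      _ < 16*24576^2 * ε * c^4 := hstep
      _ = W * c^4 := by rw [← hεW]
  have hc2 : c^2 ≤ W * L^2 * (1/16) := by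
    have hLsq : L^2 = c^6 / (24576^2 * (k:ℝ)^4) := by
      rw [hL_def, ht_def]
      field_simp
      ring
    rw [hLsq, show W * (c^6 / (24576^2 * (k:ℝ)^4)) * (1/16)
      = W * c^6 / (16 * 24576^2 * (k:ℝ)^4) by field_simp]
    rw [le_div_iff₀ (by positivity)]
    calc c^2 * (16 * 24576^2 * (k:ℝ)^4)
        = (16 * 24576^2 * (k:ℝ)^4) * c^2 := by ring
      _ ≤ (W * c^4) * c^2 := mul_le_mul_of_nonneg_right hfinal.le (sq_nonneg c)
      _ = W * c^6 := by ring
  have hInt_ge : c^2 ≤ ∫ ξ, H ξ := le_trans hc2 hlow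
  calc c = (c^2)^(1/2:ℝ) := by
        rw [← Real.rpow_natCast c 2, ← Real.rpow_mul hcpos.le]
        norm_num
    _ ≤ (∫ ξ, H ξ)^(1/2:ℝ) := Real.rpow_le_rpow (by positivity) hInt_ge (by norm_num)
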